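/- Let a₁,a₂,a₃,a₄ be nonzero integers with α = a₁a₂a₃a₄ and ψ₁(x)=Σaᵢxᵢ², ψ̃₁(w)=Σᵢ(α/aᵢ)wᵢ². For every odd prime p with p ∤ 2α and every w∈ℤ⁴: if p divides ψ̃₁(w) then S_{1,p}(w) = χ_p(α)·p²·(p−1), and if p does not divide ψ̃₁(w) then S_{1,p}(w) = −χ_p(α)·p². -/

import Mathlib

open Finset AddChar ZMod

/-- `ψ(c, x) = c₁x₁² + c₂x₂² + c₃x₃² + c₄x₄²` for a diagonal quaternary quadratic form. -/
def psi (c : Fin 4 → ℤ) (x : Fin 4 → ℤ) : ℤ := ∑ i, c i * x i ^ 2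

/-- The adjoint form `ψ̃₁(w) = Σᵢ (α/aᵢ)·wᵢ²` where `α = a₁a₂a₃a₄`. -/
def psit (a : Fin 4 → ℤ) (w : Fin 4 → ℤ) : ℤ := ∑ i, ((∏ j, a j) / a i) * w i ^ 2

/-- The complete exponential sum
`S_{1,c}(w) = Σ*_{a mod c} Σ_{k mod c} e((aψ₁(k)+w·k)/c)` with `e(t) = exp(2πit)`. -/
noncomputable def S1 (a : Fin 4 → ℤ) (c : ℕ) (w : Fin 4 → ℤ) : ℂ :=
  ∑ x ∈ (Finset.range c).filter (fun x => Nat.Coprime x c),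
    ∑ k ∈ Fintype.piFinset fun _ : Fin 4 => Finset.range c,
      Complex.exp (2 * (Real.pi : ℂ) * Complex.I *
        (((x : ℂ) * ((psi a (fun i => (k i : ℤ)) : ℤ) : ℂ) + ∑ i, (w i : ℂ) * (k i : ℂ))
          / (c : ℂ)))

section Helpers

variable {p : ℕ} [Fact p.Prime]

noncomputable def qc (p : ℕ) [Fact p.Prime] : MulChar (ZMod p) ℂ :=
  (quadraticChar (ZMod p)).ringHomComp (Int.castRingHom ℂ)

lemma qc_apply (x : ZMod p) : qc p x = ((quadraticChar (ZMod p) x : ℤ) : ℂ) := rfl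

lemma ringChar_zmod_ne_two (hp2 : p ≠ 2) : ringChar (ZMod p) ≠ 2 := by
  rw [ZMod.ringChar_zmod_n]; exact hp2

lemma qc_ne_one (hp2 : p ≠ 2) : qc p ≠ 1 := by
  rw [qc, Ne, MulChar.ringHomComp_eq_one_iff Int.cast_injective]
  exact quadraticChar_ne_one (ringChar_zmod_ne_two hp2)

lemma qc_quad : (qc p).IsQuadratic :=
  (quadraticChar_isQuadratic (ZMod p)).comp _

lemma qc_mul_self {x : ZMod p} (hx : x ≠ 0) : qc p x * qc p x = 1 := by
  have h := quadraticChar_sq_one (F := ZMod p) hx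
  rw [qc_apply, ← Int.cast_mul, ← sq, h, Int.cast_one]

lemma sum_comp_sq (hp2 : p ≠ 2) (f : ZMod p → ℂ) :
    ∑ k : ZMod p, f (k ^ 2) = ∑ t : ZMod p, (1 + qc p t) * f t := by
  have h := Finset.sum_fiberwise_eq_sum_filter' (univ : Finset (ZMod p)) univ
      (fun k => k ^ 2) f
  simp only [mem_univ, filter_true] at h
  rw [← h]
  refine sum_congr rfl fun t _ => ?_
  rw [Finset.sum_const, nsmul_eq_mul]
  congr 1
  have hc := quadraticChar_card_sqrts (ringChar_zmod_ne_two hp2) t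
  rw [Set.toFinset_setOf] at hc
  rw [qc_apply]
  have : ((#(univ.filter fun x : ZMod p => x ^ 2 = t) : ℤ) : ℂ)
      = ((quadraticChar (ZMod p) t + 1 : ℤ) : ℂ) := congrArg (fun z : ℤ => (z : ℂ)) hc
  push_cast at this
  rw [this]; ring

lemma sum_A_sq (hp2 : p ≠ 2) {A : ZMod p} (hA : A ≠ 0) :
    ∑ k : ZMod p, ZMod.stdAddChar (A * k ^ 2)
      = qc p A * gaussSum (qc p) ZMod.stdAddChar := by
  rw [sum_comp_sq hp2 (fun t => ZMod.stdAddChar (A * t))]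
  simp only [add_mul, one_mul]
  rw [Finset.sum_add_distrib]
  have h1 : ∑ t : ZMod p, ZMod.stdAddChar (A * t) = 0 := by
    simp_rw [mul_comm A]
    rw [AddChar.sum_mulShift A (ZMod.isPrimitive_stdAddChar p), if_neg hA]
    norm_num
  have h2 : ∑ t : ZMod p, qc p t * ZMod.stdAddChar (A * t)
      = qc p A * gaussSum (qc p) ZMod.stdAddChar := by
    have hU : IsUnit A := hA.isUnit
    have key := gaussSum_mulShift (qc p) ZMod.stdAddChar hU.unit
    have hg : gaussSum (qc p) (AddChar.mulShift ZMod.stdAddChar hU.unit)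
        = ∑ t : ZMod p, qc p t * ZMod.stdAddChar (A * t) := by
      unfold gaussSum
      refine sum_congr rfl fun t _ => ?_
      rw [AddChar.mulShift_apply, IsUnit.unit_spec]
    rw [hg, IsUnit.unit_spec] at key
    calc ∑ t : ZMod p, qc p t * ZMod.stdAddChar (A * t)
        = (qc p A * qc p A) * ∑ t : ZMod p, qc p t * ZMod.stdAddChar (A * t) := by
          rw [qc_mul_self hA, one_mul]
      _ = qc p A * gaussSum (qc p) ZMod.stdAddChar := by rw [mul_assoc, key]
  rw [h1, h2, zero_add]

lemma zmod_two_nz (hp2 : p ≠ 2) : (2 : ZMod p) ≠ 0 := by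
  have : ((2 : ℕ) : ZMod p) ≠ 0 := by
    rw [Ne, ZMod.natCast_eq_zero_iff]
    intro h
    exact hp2 ((Nat.prime_dvd_prime_iff_eq (Fact.out) Nat.prime_two).mp h)
  exact_mod_cast this

lemma zmod_four_nz (hp2 : p ≠ 2) : (4 : ZMod p) ≠ 0 := by
  have h2 := zmod_two_nz (p := p) hp2
  have : (4 : ZMod p) = 2 * 2 := by norm_num
  rw [this]
  exact mul_ne_zero h2 h2

lemma complete_square (hp2 : p ≠ 2) {A : ZMod p} (hA : A ≠ 0) (B : ZMod p) :
    ∑ k : ZMod p, ZMod.stdAddChar (A * k ^ 2 + B * k)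
      = qc p A * gaussSum (qc p) ZMod.stdAddChar * ZMod.stdAddChar (-(B ^ 2) / (4 * A)) := by
  have h2 := zmod_two_nz (p := p) hp2
  have h4 := zmod_four_nz (p := p) hp2
  rw [← Equiv.sum_comp (Equiv.subRight (B / (2 * A)))
      (fun k => ZMod.stdAddChar (A * k ^ 2 + B * k))]
  have key : ∀ k : ZMod p,
      A * (k - B / (2 * A)) ^ 2 + B * (k - B / (2 * A)) = A * k ^ 2 + -(B ^ 2) / (4 * A) := by
    intro k
    field_simp
    ring
  simp only [Equiv.subRight_apply]
  simp_rw [key, AddChar.map_add_eq_mul]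
  rw [← Finset.sum_mul, sum_A_sq hp2 hA]

lemma gauss4 (hp2 : p ≠ 2) : gaussSum (qc p) ZMod.stdAddChar ^ 4 = (p : ℂ) ^ 2 := by
  have hG : gaussSum (qc p) ZMod.stdAddChar ^ 2 = qc p (-1) * (Fintype.card (ZMod p) : ℂ) :=
    gaussSum_sq (qc_ne_one hp2) qc_quad (ZMod.isPrimitive_stdAddChar p)
  have hne : (-1 : ZMod p) ≠ 0 := by
    simp only [ne_eq, neg_eq_zero, one_ne_zero, not_false_eq_true]
  calc gaussSum (qc p) ZMod.stdAddChar ^ 4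
      = (gaussSum (qc p) ZMod.stdAddChar ^ 2) ^ 2 := by ring
    _ = (qc p (-1) * qc p (-1)) * (Fintype.card (ZMod p) : ℂ) ^ 2 := by rw [hG]; ring
    _ = (p : ℂ) ^ 2 := by rw [qc_mul_self hne, one_mul, ZMod.card]

end Helpers

section Helpers2

variable {p : ℕ} [Fact p.Prime]

lemma stdAddChar_sum_four (t : Fin 4 → ZMod p) :
    ZMod.stdAddChar (∑ i, t i) = ∏ i, ZMod.stdAddChar (t i) := by
  rw [Fin.sum_univ_four, Fin.prod_univ_four, AddChar.map_add_eq_mul, AddChar.map_add_eq_mul,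
    AddChar.map_add_eq_mul]

lemma qc_pow_four {x : ZMod p} (hx : x ≠ 0) : qc p x ^ 4 = 1 := by
  have h := qc_mul_self hx
  calc qc p x ^ 4 = (qc p x * qc p x) * (qc p x * qc p x) := by ring
    _ = 1 := by rw [h, one_mul]

lemma inner_eval (hp2 : p ≠ 2) {x : ZMod p} (hx : x ≠ 0) {A W : Fin 4 → ZMod p}
    (hA : ∀ i, A i ≠ 0) :
    ∑ k : Fin 4 → ZMod p,
        ZMod.stdAddChar (x * (∑ i, A i * k i ^ 2) + ∑ i, W i * k i)
      = qc p (∏ i, A i) * (p : ℂ) ^ 2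
          * ZMod.stdAddChar (∑ i, -(W i ^ 2) / (4 * (x * A i))) := by
  have hstep : ∀ k : Fin 4 → ZMod p,
      ZMod.stdAddChar (x * (∑ i, A i * k i ^ 2) + ∑ i, W i * k i)
        = ∏ i, ZMod.stdAddChar ((x * A i) * k i ^ 2 + W i * k i) := by
    intro k
    rw [← stdAddChar_sum_four]
    congr 1
    rw [Finset.mul_sum, ← Finset.sum_add_distrib]
    exact Finset.sum_congr rfl fun i _ => by ring
  simp_rw [hstep]
  have hpi : (Finset.univ : Finset (Fin 4 → ZMod p))
      = Fintype.piFinset (fun _ => (Finset.univ : Finset (ZMod p))) := by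
    simp
  have hps := Finset.prod_univ_sum (fun _ : Fin 4 => (Finset.univ : Finset (ZMod p)))
    (fun i c => ZMod.stdAddChar ((x * A i) * c ^ 2 + W i * c))
  rw [hpi, ← hps]
  have hterm : ∀ i : Fin 4, ∑ t : ZMod p, ZMod.stdAddChar ((x * A i) * t ^ 2 + W i * t)
      = qc p (x * A i) * gaussSum (qc p) ZMod.stdAddChar
          * ZMod.stdAddChar (-(W i ^ 2) / (4 * (x * A i))) :=
    fun i => complete_square hp2 (mul_ne_zero hx (hA i)) _
  simp_rw [hterm]
  rw [Finset.prod_mul_distrib, Finset.prod_mul_distrib, ← stdAddChar_sum_four,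
    Finset.prod_const, Finset.card_univ, Fintype.card_fin, gauss4 hp2]
  have hq : ∏ i : Fin 4, qc p (x * A i) = qc p (∏ i, A i) := by
    simp_rw [map_mul]
    rw [Finset.prod_mul_distrib, Finset.prod_const, Finset.card_univ, Fintype.card_fin,
      qc_pow_four hx, one_mul, ← map_prod]
  rw [hq]

end Helpers2


section Conv

variable {p : ℕ} [Fact p.Prime]

lemma inner_conv (a w : Fin 4 → ℤ) (x : ℕ) :
    ∑ k ∈ Fintype.piFinset fun _ : Fin 4 => Finset.range p,
      Complex.exp (2 * (Real.pi : ℂ) * Complex.I *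
        (((x : ℂ) * ((psi a (fun i => (k i : ℤ)) : ℤ) : ℂ) + ∑ i, (w i : ℂ) * (k i : ℂ))
          / (p : ℂ)))
    = ∑ k : Fin 4 → ZMod p,
        ZMod.stdAddChar ((x : ZMod p) * (∑ i, ((a i : ℤ) : ZMod p) * k i ^ 2)
          + ∑ i, ((w i : ℤ) : ZMod p) * k i) := by
  refine Finset.sum_nbij' (fun k => fun j => ((k j : ℕ) : ZMod p))
    (fun k => fun j => (k j).val) (fun k _ => Finset.mem_univ _) ?_ ?_ ?_ ?_
  · intro k _
    rw [Fintype.mem_piFinset]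
    exact fun j => Finset.mem_range.mpr (ZMod.val_lt _)
  · intro k hk
    funext j
    rw [Fintype.mem_piFinset] at hk
    exact ZMod.val_cast_of_lt (Finset.mem_range.mp (hk j))
  · intro k _
    funext j
    exact ZMod.natCast_zmod_val _
  · intro k hk
    set n : ℤ := x * psi a (fun i => (k i : ℤ)) + ∑ i, w i * (k i : ℤ) with hn
    have e1 : ((x : ℂ) * ((psi a (fun i => (k i : ℤ)) : ℤ) : ℂ)
        + ∑ i, (w i : ℂ) * (k i : ℂ)) = (n : ℂ) := by
      rw [hn]; push_cast; ring
    have e2 : (2 * (Real.pi : ℂ) * Complex.I * ((n : ℂ) / (p : ℂ)))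
        = 2 * (Real.pi : ℂ) * Complex.I * (n : ℂ) / (p : ℂ) := by ring
    rw [e1, e2, ← ZMod.stdAddChar_coe]
    congr 1
    rw [hn]
    push_cast [psi]
    ring

end Conv

section MainAux

variable {p : ℕ} [Fact p.Prime]

lemma stdAddChar_ne_one : (ZMod.stdAddChar : AddChar (ZMod p) ℂ) ≠ 1 := by
  have h1 := ZMod.isPrimitive_stdAddChar p (one_ne_zero)
  rwa [AddChar.mulShift_one] at h1

lemma sum_ne_zero_eval :
    ∑ y ∈ Finset.univ.filter (fun y : ZMod p => y ≠ 0), ZMod.stdAddChar y = -1 := by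
  have h0 : ∑ y : ZMod p, ZMod.stdAddChar y = 0 :=
    AddChar.sum_eq_zero_of_ne_one stdAddChar_ne_one
  rw [Finset.filter_ne', Finset.sum_erase_eq_sub (Finset.mem_univ 0), h0,
    AddChar.map_zero_eq_one]
  ring

lemma card_ne_zero_filter :
    #(Finset.univ.filter (fun y : ZMod p => y ≠ 0)) = p - 1 := by
  rw [Finset.filter_ne', Finset.card_erase_of_mem (Finset.mem_univ 0), Finset.card_univ,
    ZMod.card]

end MainAux

/-- for odd primes `p ∤ 2α`, `S_{1,p}(w) = χ_p(α)·p²·(p-1)` if `p ∣ ψ̃₁(w)`,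
and `S_{1,p}(w) = -χ_p(α)·p²` otherwise. -/
theorem stmt_14 (a : Fin 4 → ℤ) (ha : ∀ i, a i ≠ 0)
    (p : ℕ) (hp : Nat.Prime p) (hodd : Odd p)
    (hpα : ¬ ((p : ℤ) ∣ 2 * (a 0 * a 1 * a 2 * a 3))) (w : Fin 4 → ℤ) :
    ((p : ℤ) ∣ psit a w →
      S1 a p w = (jacobiSym (a 0 * a 1 * a 2 * a 3) p : ℂ) * (p : ℂ) ^ 2 * ((p : ℂ) - 1)) ∧
    (¬ (p : ℤ) ∣ psit a w →
      S1 a p w = -(jacobiSym (a 0 * a 1 * a 2 * a 3) p : ℂ) * (p : ℂ) ^ 2) := by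
  haveI : Fact p.Prime := ⟨hp⟩
  haveI : NeZero p := ⟨hp.ne_zero⟩
  have hp2 : p ≠ 2 := by rintro rfl; rw [Nat.odd_iff] at hodd; omega
  set α : ℤ := a 0 * a 1 * a 2 * a 3 with hα
  have hprod : (∏ j, a j) = α := by rw [Fin.prod_univ_four]
  have hpα' : ¬ (p : ℤ) ∣ α := fun h => hpα (h.mul_left 2)
  have hpa : ∀ i, ¬ (p : ℤ) ∣ a i := by
    intro i hdvd
    refine hpα' ?_
    rw [← hprod]
    exact dvd_trans hdvd (Finset.dvd_prod_of_mem a (Finset.mem_univ i))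
  set A : Fin 4 → ZMod p := fun i => ((a i : ℤ) : ZMod p) with hAdef
  set W : Fin 4 → ZMod p := fun i => ((w i : ℤ) : ZMod p) with hWdef
  set αc : ZMod p := ((α : ℤ) : ZMod p) with hαc
  have hA : ∀ i, A i ≠ 0 := fun i h => hpa i ((ZMod.intCast_zmod_eq_zero_iff_dvd _ _).mp h)
  have hαF : αc ≠ 0 := fun h => hpα' ((ZMod.intCast_zmod_eq_zero_iff_dvd _ _).mp h)
  have h4 : (4 : ZMod p) ≠ 0 := zmod_four_nz hp2
  set T : ZMod p := ((psit a w : ℤ) : ZMod p) with hT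
  have hprodA : ∏ i, A i = αc := by
    rw [hαc, ← hprod, hAdef]
    push_cast
    rfl
  -- Step 1 : rewrite S1 as a sum over `ZMod p`.
  have step1 : S1 a p w = ∑ x ∈ Finset.univ.filter (fun x : ZMod p => x ≠ 0),
      ∑ k : Fin 4 → ZMod p,
        ZMod.stdAddChar (x * (∑ i, A i * k i ^ 2) + ∑ i, W i * k i) := by
    rw [S1]
    refine Finset.sum_nbij' (fun x => ((x : ℕ) : ZMod p)) (fun y => y.val) ?_ ?_ ?_ ?_ ?_
    · intro x hx
      rw [Finset.mem_filter] at hx ⊢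
      refine ⟨Finset.mem_univ _, fun h => ?_⟩
      have hd : p ∣ x := (ZMod.natCast_eq_zero_iff _ _).mp h
      exact (hp.coprime_iff_not_dvd.mp (Nat.coprime_comm.mp hx.2)) hd
    · intro y hy
      rw [Finset.mem_filter] at hy ⊢
      refine ⟨Finset.mem_range.mpr (ZMod.val_lt _), ?_⟩
      refine Nat.coprime_comm.mp (hp.coprime_iff_not_dvd.mpr fun hd => ?_)
      have : ((y.val : ℕ) : ZMod p) = 0 := (ZMod.natCast_eq_zero_iff _ _).mpr hd
      rw [ZMod.natCast_zmod_val] at this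
      exact hy.2 this
    · intro x hx
      rw [Finset.mem_filter] at hx
      exact ZMod.val_cast_of_lt (Finset.mem_range.mp hx.1)
    · intro y _
      exact ZMod.natCast_zmod_val y
    · intro x _
      exact inner_conv a w x
  -- Step 2 : evaluate the inner sums.
  have hdiv : ∀ i : Fin 4, (((∏ j, a j) / a i : ℤ) : ZMod p) = αc * (A i)⁻¹ := by
    intro i
    have hd : ((∏ j, a j) / a i) * a i = ∏ j, a j :=
      Int.ediv_mul_cancel (Finset.dvd_prod_of_mem a (Finset.mem_univ i))
    have hcast : (((∏ j, a j) / a i : ℤ) : ZMod p) * A i = αc := by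
      rw [hAdef, hαc, ← Int.cast_mul, hd, hprod]
    rw [← hcast, mul_assoc, mul_inv_cancel₀ (hA i), mul_one]
  have hTsum : T = αc * ∑ i, (A i)⁻¹ * W i ^ 2 := by
    rw [hT, psit]
    push_cast
    rw [Finset.mul_sum]
    refine Finset.sum_congr rfl fun i _ => ?_
    rw [hdiv i]
    ring
  have harg : ∀ x : ZMod p, x ≠ 0 →
      ∑ i, -(W i ^ 2) / (4 * (x * A i)) = -T / (4 * x * αc) := by
    intro x hx
    have hterm : ∀ i : Fin 4, -(W i ^ 2) / (4 * (x * A i))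
        = (αc * ((A i)⁻¹ * W i ^ 2)) * (-1 / (4 * x * αc)) := by
      intro i
      have hAi := hA i
      field_simp
    calc ∑ i, -(W i ^ 2) / (4 * (x * A i))
        = ∑ i, (αc * ((A i)⁻¹ * W i ^ 2)) * (-1 / (4 * x * αc)) :=
          Finset.sum_congr rfl fun i _ => hterm i
      _ = (αc * ∑ i, (A i)⁻¹ * W i ^ 2) * (-1 / (4 * x * αc)) := by
          rw [← Finset.sum_mul, ← Finset.mul_sum]
      _ = -T / (4 * x * αc) := by rw [← hTsum]; ring
  have step2 : S1 a p w = qc p αc * (p : ℂ) ^ 2 *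
      ∑ x ∈ Finset.univ.filter (fun x : ZMod p => x ≠ 0),
        ZMod.stdAddChar (-T / (4 * x * αc)) := by
    rw [step1, Finset.mul_sum]
    refine Finset.sum_congr rfl fun x hx => ?_
    rw [Finset.mem_filter] at hx
    rw [inner_eval hp2 hx.2 hA, hprodA, harg x hx.2]
  have hqc : qc p αc = ((jacobiSym α p : ℤ) : ℂ) := by
    rw [qc_apply]
    congr 1
    rw [← jacobiSym.legendreSym.to_jacobiSym, legendreSym, hαc]
  constructor
  · -- case `p ∣ psit a w`
    intro hdvd
    have hT0 : T = 0 := (ZMod.intCast_zmod_eq_zero_iff_dvd _ _).mpr hdvd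
    have hsum : ∑ x ∈ Finset.univ.filter (fun x : ZMod p => x ≠ 0),
        ZMod.stdAddChar (-T / (4 * x * αc)) = (p : ℂ) - 1 := by
      have : ∀ x : ZMod p, -T / (4 * x * αc) = 0 := by
        intro x; rw [hT0, neg_zero, zero_div]
      simp only [this, AddChar.map_zero_eq_one, Finset.sum_const, nsmul_eq_mul, mul_one]
      rw [card_ne_zero_filter, Nat.cast_sub hp.one_lt.le, Nat.cast_one]
    rw [step2, hsum, hqc]
  · -- case `¬ p ∣ psit a w`
    intro hndvd
    have hT0 : T ≠ 0 := fun h => hndvd ((ZMod.intCast_zmod_eq_zero_iff_dvd _ _).mp h)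
    have hsum : ∑ x ∈ Finset.univ.filter (fun x : ZMod p => x ≠ 0),
        ZMod.stdAddChar (-T / (4 * x * αc)) = -1 := by
      rw [← sum_ne_zero_eval (p := p)]
      refine Finset.sum_nbij' (fun x => -T / (4 * x * αc)) (fun y => -T / (4 * y * αc))
        ?_ ?_ ?_ ?_ ?_
      · intro x hx
        rw [Finset.mem_filter] at hx ⊢
        exact ⟨Finset.mem_univ _, div_ne_zero (neg_ne_zero.mpr hT0)
          (mul_ne_zero (mul_ne_zero h4 hx.2) hαF)⟩
      · intro y hy
        rw [Finset.mem_filter] at hy ⊢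
        exact ⟨Finset.mem_univ _, div_ne_zero (neg_ne_zero.mpr hT0)
          (mul_ne_zero (mul_ne_zero h4 hy.2) hαF)⟩
      · intro x hx
        rw [Finset.mem_filter] at hx
        have hx0 := hx.2
        field_simp
      · intro y hy
        rw [Finset.mem_filter] at hy
        have hy0 := hy.2
        field_simp
      · intro x _
        rfl
    rw [step2, hsum, hqc]
    ring
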